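/- Let n ≥ 1 be an integer, m ∈ (0,1), p := 2/(1−m) − n, and B > 0. Let ℓ, k ∈ ℕ, and let h : ℝⁿ → ℝ be a harmonic polynomial (Δh = 0) that is homogeneous of degree ℓ. Define Q : ℝ → ℝ by Q(u) := Σ_{j=0}^{k} [ (k+ℓ−1−p/2)_j · (−k)_j / ( (ℓ+n/2)_j · j! ) ] · (−u/B)^j, where (a)_j := a(a+1)⋯(a+j−1) denotes the rising factorial with (a)_0 := 1, and set Ψ(x) := Q(|x|²)·h(x). Then for every x ∈ ℝⁿ, (B+|x|²)·ΔΨ(x) − (2/(1−m))·x·∇Ψ(x) = λ_{ℓk}·Ψ(x), where λ_{ℓk} := −((ℓ+2k)p + nℓ + 4k(1−ℓ−k)). -/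

import Mathlib

open scoped BigOperators

noncomputable section

/-- The `i`-th standard basis vector of `ℝⁿ`. -/
def stdBasis (n : ℕ) (i : Fin n) : EuclideanSpace ℝ (Fin n) :=
  EuclideanSpace.single i 1

/-- The Laplacian (sum of second partial derivatives) of `f : ℝⁿ → ℝ`. -/
def lap (n : ℕ) (f : EuclideanSpace ℝ (Fin n) → ℝ) (x : EuclideanSpace ℝ (Fin n)) : ℝ :=
  ∑ i : Fin n, fderiv ℝ (fun y => fderiv ℝ f y (stdBasis n i)) x (stdBasis n i)

/-- `x · ∇f x`. -/
def gradDot (n : ℕ) (f : EuclideanSpace ℝ (Fin n) → ℝ) (x : EuclideanSpace ℝ (Fin n)) : ℝ :=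
  ∑ i : Fin n, x i * fderiv ℝ f x (stdBasis n i)

/-- The moment parameter `p = 2/(1-m) - n`. -/
def pPar (n : ℕ) (m : ℝ) : ℝ := 2 / (1 - m) - n

/-- The eigenvalues `λ_{ℓk} = -((ℓ+2k)p + nℓ + 4k(1-ℓ-k))`. -/
def lamEig (n : ℕ) (p : ℝ) (ℓ k : ℕ) : ℝ :=
  -(((ℓ : ℝ) + 2 * (k : ℝ)) * p + (n : ℝ) * (ℓ : ℝ) + 4 * (k : ℝ) * (1 - (ℓ : ℝ) - (k : ℝ)))

/-- Evaluation of a multivariate polynomial as a function on `ℝⁿ`. -/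
def evalPoly (n : ℕ) (P : MvPolynomial (Fin n) ℝ) (x : EuclideanSpace ℝ (Fin n)) : ℝ :=
  MvPolynomial.eval (fun i => x i) P

/-- The truncated hypergeometric sum
`Q(u) = Σ_{j=0}^{k} ((k+ℓ-1-p/2)_j (-k)_j)/((ℓ+n/2)_j j!) (-u/B)^j`,
where `(a)_j` is the rising factorial. -/
def QPoly (n : ℕ) (p B : ℝ) (ℓ k : ℕ) (u : ℝ) : ℝ :=
  ∑ j ∈ Finset.range (k + 1),
    (Polynomial.eval ((k : ℝ) + (ℓ : ℝ) - 1 - p / 2) (ascPochhammer ℝ j) *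
        Polynomial.eval (-(k : ℝ)) (ascPochhammer ℝ j) /
      (Polynomial.eval ((ℓ : ℝ) + (n : ℝ) / 2) (ascPochhammer ℝ j) * (j.factorial : ℝ))) *
      (-u / B) ^ j

section Aux

open MvPolynomial

def gradCLM (n : ℕ) (P : MvPolynomial (Fin n) ℝ) (x : EuclideanSpace ℝ (Fin n)) :
    EuclideanSpace ℝ (Fin n) →L[ℝ] ℝ :=
  ∑ i : Fin n, evalPoly n (pderiv i P) x •
    (EuclideanSpace.proj i : EuclideanSpace ℝ (Fin n) →L[ℝ] ℝ)

lemma gradCLM_apply (n : ℕ) (P : MvPolynomial (Fin n) ℝ) (x v : EuclideanSpace ℝ (Fin n)) :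
    gradCLM n P x v = ∑ i : Fin n, evalPoly n (pderiv i P) x * v i := by
  simp [gradCLM]

lemma hasFDerivAt_evalPoly (n : ℕ) (P : MvPolynomial (Fin n) ℝ) (x : EuclideanSpace ℝ (Fin n)) :
    HasFDerivAt (evalPoly n P) (gradCLM n P x) x := by
  induction P using MvPolynomial.induction_on with
  | C a =>
      have : evalPoly n (C a) = fun _ => a := by funext y; simp [evalPoly]
      rw [this]
      have h0 : gradCLM n (C a) x = 0 := by
        ext v; simp [gradCLM_apply, evalPoly]
      rw [h0]; exact hasFDerivAt_const a x
  | add p q hp hq =>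
      have : evalPoly n (p + q) = fun y => evalPoly n p y + evalPoly n q y := by
        funext y; simp [evalPoly]
      rw [this]
      have h0 : gradCLM n (p + q) x = gradCLM n p x + gradCLM n q x := by
        ext v; simp [gradCLM_apply, evalPoly, Finset.sum_add_distrib, add_mul]
      rw [h0]; exact hp.add hq
  | mul_X p i hp =>
      have : evalPoly n (p * X i) = fun y => evalPoly n p y * y i := by
        funext y; simp [evalPoly]
      rw [this]
      have hproj : HasFDerivAt (fun y : EuclideanSpace ℝ (Fin n) => y i)
          (EuclideanSpace.proj i : EuclideanSpace ℝ (Fin n) →L[ℝ] ℝ) x :=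
        by simpa using (EuclideanSpace.proj i : EuclideanSpace ℝ (Fin n) →L[ℝ] ℝ).hasFDerivAt (x := x)
      have := hp.mul hproj
      refine this.congr_fderiv ?_
      refine ContinuousLinearMap.ext fun v => ?_
      simp only [gradCLM_apply, ContinuousLinearMap.add_apply, ContinuousLinearMap.smul_apply,
        smul_eq_mul]
      have : ∀ j : Fin n, evalPoly n (pderiv j (p * X i)) x * v j
          = evalPoly n (pderiv j p) x * x i * v j
            + (if i = j then evalPoly n p x * v j else 0) := by
        intro j
        classical
        rw [pderiv_mul]
        simp only [evalPoly, map_add, map_mul, pderiv_X]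
        by_cases hij : i = j
        · subst hij; simp [Pi.single_eq_same]; ring
        · simp [Pi.single_eq_of_ne hij, hij]
      rw [Finset.sum_congr rfl fun j _ => this j]
      rw [Finset.sum_add_distrib, Finset.sum_ite_eq]
      simp only [Finset.mem_univ, if_true, gradCLM_apply]
      rw [Finset.mul_sum]
      rw [add_comm]
      congr 1
      · exact Finset.sum_congr rfl fun j _ => by ring

lemma fderiv_evalPoly (n : ℕ) (P : MvPolynomial (Fin n) ℝ) (x : EuclideanSpace ℝ (Fin n))
    (i : Fin n) :
    fderiv ℝ (evalPoly n P) x (stdBasis n i) = evalPoly n (pderiv i P) x := by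
  rw [(hasFDerivAt_evalPoly n P x).fderiv, gradCLM_apply]
  have : ∀ j : Fin n, stdBasis n i j = if j = i then (1:ℝ) else 0 := by
    intro j; simp [stdBasis, EuclideanSpace.single_apply]
  simp only [this, mul_ite, mul_one, mul_zero]
  simp

lemma lap_evalPoly (n : ℕ) (P : MvPolynomial (Fin n) ℝ) (x : EuclideanSpace ℝ (Fin n)) :
    lap n (evalPoly n P) x = evalPoly n (∑ i : Fin n, pderiv i (pderiv i P)) x := by
  unfold lap
  have h1 : ∀ i : Fin n, (fun y => fderiv ℝ (evalPoly n P) y (stdBasis n i))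
      = evalPoly n (pderiv i P) := fun i => funext fun y => fderiv_evalPoly n P y i
  have h2 : ∀ i : Fin n, fderiv ℝ (fun y => fderiv ℝ (evalPoly n P) y (stdBasis n i)) x
      (stdBasis n i) = evalPoly n (pderiv i (pderiv i P)) x := by
    intro i; rw [h1 i, fderiv_evalPoly]
  rw [Finset.sum_congr rfl fun i _ => h2 i]
  simp [evalPoly, map_sum]

lemma gradDot_evalPoly (n : ℕ) (P : MvPolynomial (Fin n) ℝ) (x : EuclideanSpace ℝ (Fin n)) :
    gradDot n (evalPoly n P) x = evalPoly n (∑ i : Fin n, X i * pderiv i P) x := by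
  unfold gradDot
  rw [Finset.sum_congr rfl fun i _ => by rw [fderiv_evalPoly]]
  simp [evalPoly, map_sum]

lemma X_mul_pderiv_monomial {n : ℕ} (i : Fin n) (d : Fin n →₀ ℕ) (r : ℝ) :
    X i * pderiv i (monomial d r) = d i • monomial d r := by
  rw [pderiv_monomial]
  by_cases hd : d i = 0
  · simp [hd]
  · have hle : Finsupp.single i 1 ≤ d := by
      rw [Finsupp.single_le_iff]; omega
    rw [X, monomial_mul, add_tsub_cancel_of_le hle, one_mul]
    rw [smul_monomial]
    congr 1
    simp [nsmul_eq_mul, mul_comm]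

lemma euler {n ℓ : ℕ} (h : MvPolynomial (Fin n) ℝ) (hhom : h.IsHomogeneous ℓ) :
    ∑ i : Fin n, X i * pderiv i h = ℓ • h := by
  conv_lhs => rw [h.as_sum]
  conv_rhs => rw [h.as_sum]
  simp only [map_sum, Finset.mul_sum, Finset.smul_sum]
  rw [Finset.sum_comm]
  refine Finset.sum_congr rfl fun d hd => ?_
  rw [Finset.sum_congr rfl fun i _ => X_mul_pderiv_monomial i d (coeff d h)]
  rw [← Finset.sum_smul]
  congr 1
  have h1 : ∑ i : Fin n, d i = ∑ i ∈ d.support, d i := by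
    refine (Finset.sum_subset (Finset.subset_univ _) fun i _ hi => ?_).symm
    simpa using Finsupp.notMem_support_iff.mp hi
  rw [h1]
  have := hhom (mem_support_iff.mp hd)
  change Finsupp.weight (fun _ => 1) d = ℓ at this
  rw [← Finsupp.degree_eq_weight_one] at this
  exact this

def Spoly (n : ℕ) : MvPolynomial (Fin n) ℝ := ∑ i : Fin n, X i ^ 2

lemma pderiv_Spoly {n : ℕ} (i : Fin n) : pderiv i (Spoly n) = 2 * X i := by
  classical
  rw [Spoly, map_sum]
  rw [Finset.sum_congr rfl fun j _ => pderiv_pow (i := i) (f := X j) (n := 2)]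
  simp only [pderiv_X, Pi.single_apply, pow_one]
  rw [Finset.sum_congr rfl fun j _ => by
    rw [show ((2:ℕ):MvPolynomial (Fin n) ℝ) * X j ^ (2-1) * (if j = i then 1 else 0)
      = if j = i then 2 * X j else 0 from by split <;> simp [*]]]
  simp

lemma evalPoly_Spoly {n : ℕ} (x : EuclideanSpace ℝ (Fin n)) :
    evalPoly n (Spoly n) x = ‖x‖ ^ 2 := by
  have : ‖x‖ ^ 2 = ∑ i : Fin n, x i ^ 2 := by
    rw [EuclideanSpace.norm_eq, Real.sq_sqrt (by positivity)]
    exact Finset.sum_congr rfl fun i _ => by rw [Real.norm_eq_abs, sq_abs]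
  rw [this]
  simp [evalPoly, Spoly]

lemma pderiv_aeval {n : ℕ} (i : Fin n) (F : Polynomial ℝ) (S : MvPolynomial (Fin n) ℝ) :
    pderiv i (Polynomial.aeval S F) =
      Polynomial.aeval S (Polynomial.derivative F) * pderiv i S := by
  induction F using Polynomial.induction_on' with
  | add p q hp hq => simp [hp, hq]; ring
  | monomial m r =>
      rw [Polynomial.aeval_monomial, Polynomial.derivative_monomial, Polynomial.aeval_monomial]
      rw [pderiv_mul]
      have : (pderiv i) (algebraMap ℝ (MvPolynomial (Fin n) ℝ) r) = 0 := by
        simp [algebraMap_eq]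
      rw [this, zero_mul, zero_add, pderiv_pow]
      simp only [algebraMap_eq, map_mul, map_natCast]
      ring

lemma harm_poly {n : ℕ} (h : MvPolynomial (Fin n) ℝ)
    (hharm : ∀ x, (∑ i : Fin n, fderiv ℝ (fun y => fderiv ℝ (evalPoly n h) y (stdBasis n i)) x (stdBasis n i)) = 0) :
    ∑ i : Fin n, pderiv i (pderiv i h) = 0 := by
  apply MvPolynomial.funext
  intro g
  have := hharm ((WithLp.equiv 2 (Fin n → ℝ)).symm g)
  rw [show (∑ i : Fin n, fderiv ℝ (fun y => fderiv ℝ (evalPoly n h) y (stdBasis n i)) ((WithLp.equiv 2 (Fin n → ℝ)).symm g) (stdBasis n i)) = lap n (evalPoly n h) ((WithLp.equiv 2 (Fin n → ℝ)).symm g) from rfl] at this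
  rw [lap_evalPoly] at this
  simpa [evalPoly] using this

def ccoef (n : ℕ) (p : ℝ) (ℓ k : ℕ) (j : ℕ) : ℝ :=
  Polynomial.eval ((k : ℝ) + (ℓ : ℝ) - 1 - p / 2) (ascPochhammer ℝ j) *
      Polynomial.eval (-(k : ℝ)) (ascPochhammer ℝ j) /
    (Polynomial.eval ((ℓ : ℝ) + (n : ℝ) / 2) (ascPochhammer ℝ j) * (j.factorial : ℝ))

def Fpoly (n : ℕ) (p B : ℝ) (ℓ k : ℕ) : Polynomial ℝ :=
  ∑ j ∈ Finset.range (k + 1),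
    Polynomial.C (ccoef n p ℓ k j) * (Polynomial.C (-B⁻¹) * Polynomial.X) ^ j

lemma eval_Fpoly (n : ℕ) (p B : ℝ) (ℓ k : ℕ) (u : ℝ) :
    (Fpoly n p B ℓ k).eval u = QPoly n p B ℓ k u := by
  rw [Fpoly, QPoly, Polynomial.eval_finset_sum]
  refine Finset.sum_congr rfl fun j _ => ?_
  rw [Polynomial.eval_mul, Polynomial.eval_pow, Polynomial.eval_mul, Polynomial.eval_C,
    Polynomial.eval_C, Polynomial.eval_X, ccoef]
  congr 2
  field_simp

lemma deriv_term (co a : ℝ) (m : ℕ) :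
    Polynomial.derivative (Polynomial.C co * (Polynomial.C a * Polynomial.X) ^ m)
      = Polynomial.C (co * m * a) * (Polynomial.C a * Polynomial.X) ^ (m - 1) := by
  rw [Polynomial.derivative_C_mul, Polynomial.derivative_pow]
  have : Polynomial.derivative (Polynomial.C a * Polynomial.X) = Polynomial.C a := by
    simp
  rw [this]
  rw [map_mul, map_mul]
  simp only [Polynomial.C_eq_natCast]
  ring

lemma derivF (n : ℕ) (p B : ℝ) (ℓ k : ℕ) :
    Polynomial.derivative (Fpoly n p B ℓ k)
      = ∑ j ∈ Finset.range (k + 1),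
          Polynomial.C (ccoef n p ℓ k j * j * (-B⁻¹)) *
            (Polynomial.C (-B⁻¹) * Polynomial.X) ^ (j - 1) := by
  rw [Fpoly, map_sum]
  exact Finset.sum_congr rfl fun j _ => deriv_term _ _ _

lemma derivF2 (n : ℕ) (p B : ℝ) (ℓ k : ℕ) :
    Polynomial.derivative (Polynomial.derivative (Fpoly n p B ℓ k))
      = ∑ j ∈ Finset.range (k + 1),
          Polynomial.C (ccoef n p ℓ k j * j * (-B⁻¹) * ((j - 1 : ℕ) : ℝ) * (-B⁻¹)) *
            (Polynomial.C (-B⁻¹) * Polynomial.X) ^ (j - 1 - 1) := by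
  rw [derivF, map_sum]
  exact Finset.sum_congr rfl fun j _ => deriv_term _ _ _

lemma keyScalar (n : ℕ) (hn : 1 ≤ n) (p B : ℝ) (hB : 0 < B) (ℓ k : ℕ) (u : ℝ) :
    (B + u) * (4 * u * (∑ j ∈ Finset.range (k+1),
        ccoef n p ℓ k j * j * (-B⁻¹) * ((j-1 : ℕ) : ℝ) * (-B⁻¹) * ((-B⁻¹) * u) ^ (j-1-1))
      + (2*(n:ℝ) + 4*(ℓ:ℝ)) * (∑ j ∈ Finset.range (k+1),
        ccoef n p ℓ k j * j * (-B⁻¹) * ((-B⁻¹) * u) ^ (j-1)))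
      - (p + (n:ℝ)) * (2 * u * (∑ j ∈ Finset.range (k+1),
        ccoef n p ℓ k j * j * (-B⁻¹) * ((-B⁻¹) * u) ^ (j-1)))
      - ((p + (n:ℝ)) * ℓ + lamEig n p ℓ k) * (∑ j ∈ Finset.range (k+1),
        ccoef n p ℓ k j * ((-B⁻¹) * u) ^ j) = 0 := by
  have hn' : (1:ℝ) ≤ (n:ℝ) := by exact_mod_cast hn
  set α : ℝ := (k:ℝ) + (ℓ:ℝ) - 1 - p/2 with hα
  set γ : ℝ := (ℓ:ℝ) + (n:ℝ)/2 with hγdef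
  set d : ℕ → ℝ := fun j => ccoef n p ℓ k j * (-B⁻¹)^j with hd
  set A : ℕ → ℝ := fun j => 4*B*(j:ℝ)*(γ + (j:ℝ) - 1) * d j * u^(j-1) with hA
  set Cc : ℕ → ℝ := fun j => 4*((j:ℝ) - (k:ℝ))*(α + (j:ℝ)) * d j * u^j with hCc
  have expand : (B + u) * (4 * u * (∑ j ∈ Finset.range (k+1),
        ccoef n p ℓ k j * j * (-B⁻¹) * ((j-1 : ℕ) : ℝ) * (-B⁻¹) * ((-B⁻¹) * u) ^ (j-1-1))
      + (2*(n:ℝ) + 4*(ℓ:ℝ)) * (∑ j ∈ Finset.range (k+1),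
        ccoef n p ℓ k j * j * (-B⁻¹) * ((-B⁻¹) * u) ^ (j-1)))
      - (p + (n:ℝ)) * (2 * u * (∑ j ∈ Finset.range (k+1),
        ccoef n p ℓ k j * j * (-B⁻¹) * ((-B⁻¹) * u) ^ (j-1)))
      - ((p + (n:ℝ)) * ℓ + lamEig n p ℓ k) * (∑ j ∈ Finset.range (k+1),
        ccoef n p ℓ k j * ((-B⁻¹) * u) ^ j)
      = ∑ j ∈ Finset.range (k+1),
          (((B+u)*(4*u)) * (ccoef n p ℓ k j * j * (-B⁻¹) * ((j-1 : ℕ) : ℝ) * (-B⁻¹) * ((-B⁻¹) * u) ^ (j-1-1))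
          + ((B+u)*(2*(n:ℝ) + 4*(ℓ:ℝ)) - (p + (n:ℝ))*(2*u)) * (ccoef n p ℓ k j * j * (-B⁻¹) * ((-B⁻¹) * u) ^ (j-1))
          + (-((p + (n:ℝ)) * ℓ + lamEig n p ℓ k)) * (ccoef n p ℓ k j * ((-B⁻¹) * u) ^ j)) := by
    rw [Finset.sum_add_distrib, Finset.sum_add_distrib, ← Finset.mul_sum, ← Finset.mul_sum,
      ← Finset.mul_sum]
    ring
  rw [expand]
  have hterm : ∀ j, (((B+u)*(4*u)) * (ccoef n p ℓ k j * j * (-B⁻¹) * ((j-1 : ℕ) : ℝ) * (-B⁻¹) * ((-B⁻¹) * u) ^ (j-1-1))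
          + ((B+u)*(2*(n:ℝ) + 4*(ℓ:ℝ)) - (p + (n:ℝ))*(2*u)) * (ccoef n p ℓ k j * j * (-B⁻¹) * ((-B⁻¹) * u) ^ (j-1))
          + (-((p + (n:ℝ)) * ℓ + lamEig n p ℓ k)) * (ccoef n p ℓ k j * ((-B⁻¹) * u) ^ j))
      = A j + Cc j := by
    intro j
    rcases j with _ | j
    · simp only [hA, hCc, hd, lamEig, hα, hγdef]
      push_cast
      ring
    rcases j with _ | i
    · simp only [hA, hCc, hd, lamEig, hα, hγdef]
      norm_num
      ring
    · simp only [hA, hCc, hd, lamEig, hα, hγdef, Nat.succ_sub_one, Nat.add_sub_cancel,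
        mul_pow]
      push_cast
      ring
  rw [Finset.sum_congr rfl fun j _ => hterm j]
  rw [Finset.sum_add_distrib]
  rw [Finset.sum_range_succ' A k, Finset.sum_range_succ Cc k]
  have hA0 : A 0 = 0 := by simp [hA]
  have hCk : Cc k = 0 := by simp [hCc]
  rw [hA0, hCk, add_zero, add_zero, ← Finset.sum_add_distrib]
  refine Finset.sum_eq_zero fun i _ => ?_
  -- A (i+1) + Cc i = 0 : the hypergeometric recursion
  have hγpos : (0:ℝ) < γ := by rw [hγdef]; positivity
  have hγi : (0:ℝ) < γ + i := by positivity
  have hDγ : 0 < Polynomial.eval γ (ascPochhammer ℝ i) := ascPochhammer_pos i γ hγpos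
  have hfac : (0:ℝ) < (i.factorial : ℝ) := by exact_mod_cast i.factorial_pos
  simp only [hA, hCc, hd, ccoef, Nat.add_sub_cancel]
  rw [ascPochhammer_succ_eval, ascPochhammer_succ_eval, ascPochhammer_succ_eval,
    Nat.factorial_succ]
  rw [← hα, ← hγdef]
  push_cast
  rw [pow_succ]
  field_simp
  ring

def Gpoly (n : ℕ) (p B : ℝ) (ℓ k : ℕ) : Polynomial ℝ :=
  (Polynomial.C B + Polynomial.X) *
      (Polynomial.C 4 * Polynomial.X *
          Polynomial.derivative (Polynomial.derivative (Fpoly n p B ℓ k)) +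
        Polynomial.C (2*(n:ℝ) + 4*(ℓ:ℝ)) * Polynomial.derivative (Fpoly n p B ℓ k)) -
    Polynomial.C (p + (n:ℝ)) * (Polynomial.C 2 * Polynomial.X *
      Polynomial.derivative (Fpoly n p B ℓ k)) -
    Polynomial.C ((p + (n:ℝ)) * ℓ + lamEig n p ℓ k) * Fpoly n p B ℓ k

lemma eval_Fpoly' (n : ℕ) (p B : ℝ) (ℓ k : ℕ) (u : ℝ) :
    (Fpoly n p B ℓ k).eval u
      = ∑ j ∈ Finset.range (k+1), ccoef n p ℓ k j * ((-B⁻¹) * u) ^ j := by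
  rw [Fpoly, Polynomial.eval_finset_sum]
  simp

lemma eval_derivF (n : ℕ) (p B : ℝ) (ℓ k : ℕ) (u : ℝ) :
    (Polynomial.derivative (Fpoly n p B ℓ k)).eval u
      = ∑ j ∈ Finset.range (k+1),
          ccoef n p ℓ k j * j * (-B⁻¹) * ((-B⁻¹) * u) ^ (j-1) := by
  rw [derivF, Polynomial.eval_finset_sum]
  simp

lemma eval_derivF2 (n : ℕ) (p B : ℝ) (ℓ k : ℕ) (u : ℝ) :
    (Polynomial.derivative (Polynomial.derivative (Fpoly n p B ℓ k))).eval u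
      = ∑ j ∈ Finset.range (k+1),
          ccoef n p ℓ k j * j * (-B⁻¹) * ((j-1 : ℕ) : ℝ) * (-B⁻¹) * ((-B⁻¹) * u) ^ (j-1-1) := by
  rw [derivF2, Polynomial.eval_finset_sum]
  simp

lemma Gpoly_eq_zero (n : ℕ) (hn : 1 ≤ n) (p B : ℝ) (hB : 0 < B) (ℓ k : ℕ) :
    Gpoly n p B ℓ k = 0 := by
  apply Polynomial.funext
  intro u
  rw [Polynomial.eval_zero, Gpoly]
  simp only [Polynomial.eval_sub, Polynomial.eval_add, Polynomial.eval_mul, Polynomial.eval_C,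
    Polynomial.eval_X, eval_derivF, eval_derivF2, eval_Fpoly']
  have := keyScalar n hn p B hB ℓ k u
  linear_combination this

lemma pderiv_two_X {n : ℕ} (i : Fin n) :
    pderiv i ((2 : MvPolynomial (Fin n) ℝ)) = 0 := by
  have h2 : (2 : MvPolynomial (Fin n) ℝ) = C (2:ℝ) := by rw [map_ofNat]
  rw [h2, pderiv_C]

section Assembly

variable {n ℓ k : ℕ} (p B : ℝ) (h : MvPolynomial (Fin n) ℝ)

lemma pderiv_prod (i : Fin n) :
    pderiv i (Polynomial.aeval (Spoly n) (Fpoly n p B ℓ k) * h)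
      = Polynomial.aeval (Spoly n) (Polynomial.derivative (Fpoly n p B ℓ k)) * (2 * X i) * h
        + Polynomial.aeval (Spoly n) (Fpoly n p B ℓ k) * pderiv i h := by
  rw [pderiv_mul, pderiv_aeval, pderiv_Spoly]

lemma lap_prod (hharm0 : ∑ i : Fin n, pderiv i (pderiv i h) = 0)
    (heuler : ∑ i : Fin n, X i * pderiv i h = C (ℓ:ℝ) * h) :
    ∑ i : Fin n, pderiv i (pderiv i (Polynomial.aeval (Spoly n) (Fpoly n p B ℓ k) * h))
      = C (4:ℝ) * Polynomial.aeval (Spoly n)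
            (Polynomial.derivative (Polynomial.derivative (Fpoly n p B ℓ k))) * Spoly n * h
        + C (2*(n:ℝ) + 4*(ℓ:ℝ)) *
            Polynomial.aeval (Spoly n) (Polynomial.derivative (Fpoly n p B ℓ k)) * h := by
  set A0 := Polynomial.aeval (Spoly n) (Fpoly n p B ℓ k) with hA0
  set A1 := Polynomial.aeval (Spoly n) (Polynomial.derivative (Fpoly n p B ℓ k)) with hA1
  set A2 := Polynomial.aeval (Spoly n)
    (Polynomial.derivative (Polynomial.derivative (Fpoly n p B ℓ k))) with hA2
  have hstep : ∀ i : Fin n, pderiv i (pderiv i (A0 * h)) =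
      (C (4:ℝ) * A2 * h) * (X i ^ 2) + (2 : MvPolynomial (Fin n) ℝ) * (A1 * h)
        + (C (4:ℝ) * A1) * (X i * pderiv i h) + A0 * pderiv i (pderiv i h) := by
    intro i
    rw [pderiv_prod]
    simp only [map_add, pderiv_mul, pderiv_aeval, pderiv_Spoly, pderiv_two_X, pderiv_X_self]
    have hC4 : C (4:ℝ) = (4 : MvPolynomial (Fin n) ℝ) := by rw [map_ofNat]
    rw [hC4]
    ring
  rw [Finset.sum_congr rfl fun i _ => hstep i]
  have s1 : ∑ i : Fin n, (C (4:ℝ) * A2 * h) * (X i ^ 2) = (C (4:ℝ) * A2 * h) * Spoly n := by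
    rw [← Finset.mul_sum, Spoly]
  have s2 : ∑ _i : Fin n, (2 : MvPolynomial (Fin n) ℝ) * (A1 * h)
      = C ((n:ℕ):ℝ) * ((2 : MvPolynomial (Fin n) ℝ) * (A1 * h)) := by
    rw [Finset.sum_const, Finset.card_univ, Fintype.card_fin, nsmul_eq_mul, map_natCast]
  have s3 : ∑ i : Fin n, (C (4:ℝ) * A1) * (X i * pderiv i h)
      = (C (4:ℝ) * A1) * (C (ℓ:ℝ) * h) := by
    rw [← Finset.mul_sum, heuler]
  have s4 : ∑ i : Fin n, A0 * pderiv i (pderiv i h) = 0 := by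
    rw [← Finset.mul_sum, hharm0, mul_zero]
  rw [Finset.sum_add_distrib, Finset.sum_add_distrib, Finset.sum_add_distrib, s1, s2, s3, s4,
    add_zero]
  have h2 : (2 : MvPolynomial (Fin n) ℝ) = C (2:ℝ) := by rw [map_ofNat]
  rw [h2, show C (2*(n:ℝ) + 4*(ℓ:ℝ)) = C (2:ℝ) * C ((n:ℕ):ℝ) + C (4:ℝ) * C ((ℓ:ℕ):ℝ) by
    rw [← map_mul, ← map_mul, ← map_add]]
  ring

lemma grad_prod (heuler : ∑ i : Fin n, X i * pderiv i h = C (ℓ:ℝ) * h) :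
    ∑ i : Fin n, X i * pderiv i (Polynomial.aeval (Spoly n) (Fpoly n p B ℓ k) * h)
      = C (2:ℝ) * Polynomial.aeval (Spoly n) (Polynomial.derivative (Fpoly n p B ℓ k))
          * Spoly n * h
        + C (ℓ:ℝ) * (Polynomial.aeval (Spoly n) (Fpoly n p B ℓ k) * h) := by
  set A0 := Polynomial.aeval (Spoly n) (Fpoly n p B ℓ k) with hA0
  set A1 := Polynomial.aeval (Spoly n) (Polynomial.derivative (Fpoly n p B ℓ k)) with hA1
  have hstep : ∀ i : Fin n, X i * pderiv i (A0 * h)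
      = (C (2:ℝ) * A1 * h) * (X i ^ 2) + A0 * (X i * pderiv i h) := by
    intro i
    rw [pderiv_prod]
    have h2 : (2 : MvPolynomial (Fin n) ℝ) = C (2:ℝ) := by rw [map_ofNat]
    rw [h2]
    ring
  rw [Finset.sum_congr rfl fun i _ => hstep i]
  have s1 : ∑ i : Fin n, (C (2:ℝ) * A1 * h) * (X i ^ 2) = (C (2:ℝ) * A1 * h) * Spoly n := by
    rw [← Finset.mul_sum, Spoly]
  have s2 : ∑ i : Fin n, A0 * (X i * pderiv i h) = A0 * (C (ℓ:ℝ) * h) := by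
    rw [← Finset.mul_sum, heuler]
  rw [Finset.sum_add_distrib, s1, s2]
  ring

lemma master (hn : 1 ≤ n) (hB : 0 < B)
    (hharm0 : ∑ i : Fin n, pderiv i (pderiv i h) = 0)
    (heuler : ∑ i : Fin n, X i * pderiv i h = C (ℓ:ℝ) * h) :
    (C B + Spoly n) *
        (∑ i : Fin n, pderiv i (pderiv i (Polynomial.aeval (Spoly n) (Fpoly n p B ℓ k) * h)))
      - C (p + (n:ℝ)) *
        (∑ i : Fin n, X i * pderiv i (Polynomial.aeval (Spoly n) (Fpoly n p B ℓ k) * h))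
      = C (lamEig n p ℓ k) * (Polynomial.aeval (Spoly n) (Fpoly n p B ℓ k) * h) := by
  rw [lap_prod p B h hharm0 heuler, grad_prod p B h heuler]
  have hG : Polynomial.aeval (Spoly n) (Gpoly n p B ℓ k) * h = 0 := by
    rw [Gpoly_eq_zero n hn p B hB ℓ k, map_zero, zero_mul]
  simp only [Gpoly, map_sub, map_add, map_mul, Polynomial.aeval_X, Polynomial.aeval_C] at hG
  simp only [algebraMap_eq] at hG
  simp only [map_add, map_mul]
  linear_combination hG

end Assembly

lemma evalPoly_aeval {n : ℕ} (F : Polynomial ℝ) (x : EuclideanSpace ℝ (Fin n)) :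
    evalPoly n (Polynomial.aeval (Spoly n) F) x = Polynomial.eval (‖x‖^2) F := by
  have h1 := Polynomial.aeval_algHom_apply
    (MvPolynomial.aeval (fun i => x i) : MvPolynomial (Fin n) ℝ →ₐ[ℝ] ℝ) (Spoly n) F
  have h2 : (MvPolynomial.aeval (fun i => x i) : MvPolynomial (Fin n) ℝ →ₐ[ℝ] ℝ) (Spoly n)
      = ‖x‖^2 := by
    have : MvPolynomial.aeval (fun i => x i) (Spoly n) = MvPolynomial.eval (fun i => x i) (Spoly n) := by
      rw [← MvPolynomial.coe_aeval_eq_eval]; rfl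
    rw [this]
    exact evalPoly_Spoly x
  rw [h2] at h1
  have h3 : Polynomial.aeval (‖x‖^2) F = Polynomial.eval (‖x‖^2) F := by
    rw [← Polynomial.coe_aeval_eq_eval]
  show MvPolynomial.eval (fun i => x i) (Polynomial.aeval (Spoly n) F) = Polynomial.eval (‖x‖^2) F
  rw [← MvPolynomial.coe_aeval_eq_eval]
  exact h1.symm.trans h3

end Aux

/-- **The explicit polynomial eigenfunctions of the linearization**
(Theorem spectrum-from-ARMA): for a harmonic polynomial `h` homogeneous of degree
`ℓ`, the function `Ψ(x) = Q(|x|²) h(x)` satisfies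
`(B+|x|²)ΔΨ - (2/(1-m)) x·∇Ψ = λ_{ℓk} Ψ`. -/
theorem statement14
    (n : ℕ) (hn : 1 ≤ n) (m : ℝ) (hm : m ∈ Set.Ioo (0 : ℝ) 1)
    (B : ℝ) (hB : 0 < B) (ℓ k : ℕ)
    (h : MvPolynomial (Fin n) ℝ)
    (hharm : ∀ x, lap n (evalPoly n h) x = 0)
    (hhom : h.IsHomogeneous ℓ) :
    ∀ x : EuclideanSpace ℝ (Fin n),
      (B + ‖x‖ ^ 2) *
          lap n (fun z => QPoly n (pPar n m) B ℓ k (‖z‖ ^ 2) * evalPoly n h z) x -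
        (2 / (1 - m)) *
          gradDot n (fun z => QPoly n (pPar n m) B ℓ k (‖z‖ ^ 2) * evalPoly n h z) x =
      lamEig n (pPar n m) ℓ k * (QPoly n (pPar n m) B ℓ k (‖x‖ ^ 2) * evalPoly n h x) := by
  intro x
  have hc : 2 / (1 - m) = pPar n m + (n:ℝ) := by rw [pPar]; ring
  have hharm0 : ∑ i : Fin n, MvPolynomial.pderiv i (MvPolynomial.pderiv i h) = 0 := harm_poly h hharm
  have heuler : ∑ i : Fin n, MvPolynomial.X i * MvPolynomial.pderiv i h = MvPolynomial.C ((ℓ:ℕ):ℝ) * h := by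
    rw [euler h hhom, nsmul_eq_mul, map_natCast]
  set p := pPar n m with hp
  have hfun : (fun z => QPoly n p B ℓ k (‖z‖^2) * evalPoly n h z)
      = evalPoly n (Polynomial.aeval (Spoly n) (Fpoly n p B ℓ k) * h) := by
    funext z
    rw [show evalPoly n (Polynomial.aeval (Spoly n) (Fpoly n p B ℓ k) * h) z
        = evalPoly n (Polynomial.aeval (Spoly n) (Fpoly n p B ℓ k)) z * evalPoly n h z from by
      simp [evalPoly]]
    rw [evalPoly_aeval, eval_Fpoly]
  rw [hfun, lap_evalPoly, gradDot_evalPoly, hc]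
  have hid := master (n := n) (ℓ := ℓ) (k := k) p B h hn hB hharm0 heuler
  have hev := congrArg (fun P => evalPoly n P x) hid
  have hS : MvPolynomial.eval (fun i => x i) (Spoly n) = ‖x‖^2 := evalPoly_Spoly x
  simp only [evalPoly, map_sub, map_mul, map_add, MvPolynomial.eval_C, hS] at hev ⊢
  rw [hev]
  have hfx := congrFun hfun x
  simp only [evalPoly, map_mul] at hfx
  rw [← hfx]
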